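/- Let q ∈ (0,∞), let (X,ρ,μ) be a quasi-metric measure space, let Ω ⊆ X be a measurable set that is bounded, i.e., sup_{x,y∈Ω} ρ(x,y) < ∞, let N be a ball quasi-Banach function quasi-norm on (X,μ), and let ‖·‖_{Y(Ω)} denote its restriction to Ω. If f is a measurable function on Ω for which there exists s₀ ∈ (0,1) with ‖(∫_Ω |f(·)−f(y)|^q/(U(·,y)·ρ(·,y)^{s₀q}) dμ(y))^{1/q}‖_{Y(Ω)} < ∞, then lim_{s→0⁺} s^{1/q}·‖(∫_Ω |f(·)−f(y)|^q/(U(·,y)·ρ(·,y)^{sq}) dμ(y))^{1/q}‖_{Y(Ω)} = 0. -/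

import Mathlib

noncomputable section

open MeasureTheory Filter Set
open scoped ENNReal NNReal Topology

namespace Paper

variable {X : Type*} [MeasurableSpace X]

/-- The ball with center `x` and radius `r` for the quasi-metric `ρ`. -/
def ball (ρ : X → X → ℝ) (x : X) (r : ℝ) : Set X := {y | ρ x y < r}

/-- `(X, ρ, μ)` is a quasi-metric measure space with quasi-triangle constant `K₀`:
`ρ` is a quasi-metric with constant `K₀` and all `ρ`-balls are `μ`-measurable. -/
structure IsQuasiMetricMeasure (ρ : X → X → ℝ) (μ : Measure X) (K₀ : ℝ) : Prop where
  nonneg : ∀ x y, 0 ≤ ρ x y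
  eq_zero_iff : ∀ x y, ρ x y = 0 ↔ x = y
  symm : ∀ x y, ρ x y = ρ y x
  one_le : 1 ≤ K₀
  triangle : ∀ x y z, ρ x z ≤ K₀ * (ρ x y + ρ y z)
  measurableSet_ball : ∀ x r, MeasurableSet (ball ρ x r)

/-- `U(x,y) := min{μ(B(x,ρ(x,y))), μ(B(y,ρ(x,y)))}`. -/
def U (ρ : X → X → ℝ) (μ : Measure X) (x y : X) : ℝ≥0∞ :=
  min (μ (ball ρ x (ρ x y))) (μ (ball ρ y (ρ x y)))

/-- `N` is a ball quasi-Banach function quasi-norm on `(X, μ)` (balls taken with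
respect to `ρ`), with quasi-triangle constant `κ ∈ [1,∞)`. -/
structure IsBallQBFNorm (ρ : X → X → ℝ) (μ : Measure X)
    (N : (X → ℝ≥0∞) → ℝ≥0∞) (κ : ℝ≥0∞) : Prop where
  one_le_kappa : 1 ≤ κ
  kappa_lt_top : κ < ∞
  eq_zero_iff : ∀ f : X → ℝ≥0∞, N f = 0 ↔ f =ᵐ[μ] 0
  mono : ∀ f g : X → ℝ≥0∞, (∀ᵐ x ∂μ, g x ≤ f x) → N g ≤ N f
  iSup_seq : ∀ F : ℕ → X → ℝ≥0∞, (∀ᵐ x ∂μ, Monotone fun m => F m x) →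
    N (fun x => ⨆ m, F m x) = ⨆ m, N (F m)
  indicator_ball_lt_top : ∀ (x : X) (r : ℝ), 0 < r →
    N ((ball ρ x r).indicator fun _ => 1) < ∞
  smul : ∀ (c : ℝ≥0) (f : X → ℝ≥0∞), N (fun x => c * f x) = c * N f
  add_le : ∀ f g : X → ℝ≥0∞, N (fun x => f x + g x) ≤ κ * (N f + N g)

/-- The Maz'ya–Shaposhnikova integrand on a set `E`:
`x ↦ (∫_E |f(x) − f(y)|^q / (U(x,y) ρ(x,y)^{sq}) dμ(y))^{1/q}`. -/
def sob (ρ : X → X → ℝ) (μ : Measure X) (E : Set X) (f : X → ℝ) (q s : ℝ) (x : X) :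
    ℝ≥0∞ :=
  (∫⁻ y in E, ENNReal.ofReal |f x - f y| ^ q /
      (U ρ μ x y * ENNReal.ofReal (ρ x y) ^ (s * q)) ∂μ) ^ (1 / q)


/-- Key pointwise comparison: with a bounded "distance" value `r ≤ R`, `R ≥ 1`,
for `0 < s ≤ s₀` the `s`-integrand is controlled by `R^(s₀ q)` times the
`s₀`-integrand. -/
lemma div_pow_le_const_mul {q s s₀ : ℝ} (hq : 0 < q) (hs : 0 < s) (hss : s ≤ s₀)
    {r R a u : ℝ≥0∞} (hr : r ≤ R) (hR : 1 ≤ R) (hRtop : R ≠ ∞) :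
    a / (u * r ^ (s * q)) ≤ R ^ (s₀ * q) * (a / (u * r ^ (s₀ * q))) := by
  set C : ℝ≥0∞ := R ^ (s₀ * q) with hC
  have hs₀ : 0 < s₀ := hs.trans_le hss
  have hC1 : 1 ≤ C := by
    calc (1 : ℝ≥0∞) = 1 ^ (s₀ * q) := (ENNReal.one_rpow _).symm
    _ ≤ C := ENNReal.rpow_le_rpow hR (mul_nonneg (by linarith) hq.le)
  have hC0 : C ≠ 0 := by intro h; simp [h] at hC1
  have hCtop : C ≠ ∞ := ENNReal.rpow_ne_top_of_nonneg (mul_nonneg hs₀.le hq.le) hRtop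
  have hrtop : r ≠ ∞ := fun h => hRtop (top_le_iff.mp (h ▸ hr))
  -- step 1 : r ^ (s₀ q) ≤ C * r ^ (s q)
  have hstep : r ^ (s₀ * q) ≤ C * r ^ (s * q) := by
    rcases eq_or_ne r 0 with hr0 | hr0
    · rw [hr0, ENNReal.zero_rpow_of_pos (by positivity)]; exact zero_le
    · have hsplit : r ^ (s₀ * q) = r ^ (s * q) * r ^ ((s₀ - s) * q) := by
        rw [← ENNReal.rpow_add _ _ hr0 hrtop]; ring_nf
      have h2 : r ^ ((s₀ - s) * q) ≤ C := by
        calc r ^ ((s₀ - s) * q) ≤ R ^ ((s₀ - s) * q) :=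
              ENNReal.rpow_le_rpow hr (mul_nonneg (by linarith) hq.le)
        _ ≤ C := ENNReal.rpow_le_rpow_of_exponent_le hR
              (by nlinarith)
      calc r ^ (s₀ * q) = r ^ (s * q) * r ^ ((s₀ - s) * q) := hsplit
      _ ≤ r ^ (s * q) * C := mul_le_mul_right h2 _
      _ = C * r ^ (s * q) := mul_comm _ _
  calc a / (u * r ^ (s * q)) = C * a / (C * (u * r ^ (s * q))) :=
        (ENNReal.mul_div_mul_left _ _ hC0 hCtop).symm
  _ ≤ C * a / (u * r ^ (s₀ * q)) := by
      refine ENNReal.div_le_div le_rfl ?_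
      calc u * r ^ (s₀ * q) ≤ u * (C * r ^ (s * q)) := mul_le_mul_right hstep _
      _ = C * (u * r ^ (s * q)) := by ring
  _ = C * (a / (u * r ^ (s₀ * q))) := by rw [mul_div_assoc]

theorem statement0 [Nonempty X] (ρ : X → X → ℝ) (μ : Measure X) (K₀ : ℝ)
    (hX : IsQuasiMetricMeasure ρ μ K₀)
    (Ω : Set X) (hΩ : MeasurableSet Ω)
    (hbdd : ∃ D : ℝ, ∀ x ∈ Ω, ∀ y ∈ Ω, ρ x y ≤ D)
    (q : ℝ) (hq : 0 < q)
    (N : (X → ℝ≥0∞) → ℝ≥0∞) (κ : ℝ≥0∞) (hN : IsBallQBFNorm ρ μ N κ)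
    (f : X → ℝ) (hf : Measurable f)
    (hfin : ∃ s₀ ∈ Set.Ioo (0:ℝ) 1, N (Ω.indicator (sob ρ μ Ω f q s₀)) < ∞) :
    Tendsto (fun s : ℝ => ENNReal.ofReal s ^ (1 / q) * N (Ω.indicator (sob ρ μ Ω f q s)))
      (𝓝[>] (0:ℝ)) (𝓝 0) := by
  obtain ⟨D, hD⟩ := hbdd
  obtain ⟨s₀, hs₀, hfin⟩ := hfin
  set R : ℝ≥0∞ := ENNReal.ofReal (max D 1) with hRdef
  have hR1 : 1 ≤ R := by
    rw [hRdef, ← ENNReal.ofReal_one]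
    exact ENNReal.ofReal_le_ofReal (le_max_right _ _)
  have hRtop : R ≠ ∞ := ENNReal.ofReal_ne_top
  set C : ℝ≥0∞ := R ^ (s₀ * q) with hCdef
  have hCtop : C ≠ ∞ := ENNReal.rpow_ne_top_of_nonneg (mul_nonneg hs₀.1.le hq.le) hRtop
  have hCq_top : C ^ (1 / q) ≠ ∞ :=
    ENNReal.rpow_ne_top_of_nonneg (by positivity) hCtop
  -- pointwise bound on sob
  have hsob : ∀ s ∈ Set.Ioc (0 : ℝ) s₀, ∀ x,
      Ω.indicator (sob ρ μ Ω f q s) x ≤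
        C ^ (1 / q) * Ω.indicator (sob ρ μ Ω f q s₀) x := by
    intro s hs x
    rcases em (x ∈ Ω) with hx | hx
    · rw [Set.indicator_of_mem hx, Set.indicator_of_mem hx]
      have hint : (∫⁻ y in Ω, ENNReal.ofReal |f x - f y| ^ q /
            (U ρ μ x y * ENNReal.ofReal (ρ x y) ^ (s * q)) ∂μ) ≤
          C * ∫⁻ y in Ω, ENNReal.ofReal |f x - f y| ^ q /
            (U ρ μ x y * ENNReal.ofReal (ρ x y) ^ (s₀ * q)) ∂μ := by
        rw [← lintegral_const_mul' _ _ hCtop]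
        refine lintegral_mono_ae ((ae_restrict_iff' hΩ).2 (ae_of_all _ fun y hy => ?_))
        refine div_pow_le_const_mul hq hs.1 hs.2 ?_ hR1 hRtop
        exact ENNReal.ofReal_le_ofReal ((hD x hx y hy).trans (le_max_left _ _))
      calc sob ρ μ Ω f q s x ≤ (C * ∫⁻ y in Ω, ENNReal.ofReal |f x - f y| ^ q /
              (U ρ μ x y * ENNReal.ofReal (ρ x y) ^ (s₀ * q)) ∂μ) ^ (1 / q) :=
            ENNReal.rpow_le_rpow hint (by positivity)
      _ = C ^ (1 / q) * sob ρ μ Ω f q s₀ x := by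
            rw [sob, ENNReal.mul_rpow_of_nonneg _ _ (by positivity)]
    · simp [Set.indicator_of_notMem hx]
  -- uniform bound on N
  set B : ℝ≥0∞ := C ^ (1 / q) * N (Ω.indicator (sob ρ μ Ω f q s₀)) with hBdef
  have hBtop : B ≠ ∞ := ENNReal.mul_ne_top hCq_top hfin.ne
  have hNbound : ∀ s ∈ Set.Ioc (0 : ℝ) s₀,
      N (Ω.indicator (sob ρ μ Ω f q s)) ≤ B := by
    intro s hs
    set c : ℝ≥0 := (C ^ (1 / q)).toNNReal with hcdef
    have hc : (c : ℝ≥0∞) = C ^ (1 / q) := ENNReal.coe_toNNReal hCq_top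
    calc N (Ω.indicator (sob ρ μ Ω f q s)) ≤
        N (fun x => c * Ω.indicator (sob ρ μ Ω f q s₀) x) := by
          refine hN.mono _ _ (ae_of_all _ fun x => ?_)
          rw [hc]; exact hsob s hs x
    _ = c * N (Ω.indicator (sob ρ μ Ω f q s₀)) := hN.smul c _
    _ = B := by rw [hc]
  -- squeeze
  have hupper : Tendsto (fun s : ℝ => ENNReal.ofReal s ^ (1 / q) * B)
      (𝓝[>] (0:ℝ)) (𝓝 0) := by
    have h1 : Tendsto (fun s : ℝ => ENNReal.ofReal s) (𝓝[>] (0:ℝ)) (𝓝 0) := by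
      have := (ENNReal.continuous_ofReal.tendsto (0 : ℝ)).mono_left
        (nhdsWithin_le_nhds (s := Set.Ioi (0:ℝ)))
      simpa using this
    have h2 : Tendsto (fun s : ℝ => ENNReal.ofReal s ^ (1 / q)) (𝓝[>] (0:ℝ)) (𝓝 0) := by
      have := h1.ennrpow_const (1 / q)
      rwa [ENNReal.zero_rpow_of_pos (by positivity)] at this
    have := ENNReal.Tendsto.mul_const h2 (Or.inr hBtop)
    simpa using this
  refine tendsto_of_tendsto_of_tendsto_of_le_of_le' tendsto_const_nhds hupper
    (Eventually.of_forall fun s => zero_le) ?_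
  filter_upwards [Ioc_mem_nhdsGT hs₀.1] with s hs
  exact mul_le_mul_right (hNbound s hs) _
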